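/- Let a(τ) = ((√2 + 1)τ + 2)/(4τ(τ + 1)) and b(τ) = ((√2 − 1)τ − 2)/(4τ(τ + 1)), and fix any τ₀ > 2(√2 + 1). Then: (i) there exists a differentiable function ψ₁ : [τ₀, ∞) → ℝ satisfying dψ₁/dτ = b(τ) − a(τ)·ψ₁(τ)² and 0 ≤ ψ₁(τ) ≤ √2 − 1 for all τ ≥ τ₀; (ii) there exists a differentiable function ψ₂ : [τ₀, ∞) → ℝ satisfying dψ₂/dτ = b(τ) − a(τ)·ψ₂(τ)² and 1 − √2 ≤ ψ₂(τ) ≤ 0 for all τ ≥ τ₀. -/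

import Mathlib

noncomputable def aR (τ : ℝ) : ℝ := ((Real.sqrt 2 + 1) * τ + 2) / (4 * τ * (τ + 1))
noncomputable def bR (τ : ℝ) : ℝ := ((Real.sqrt 2 - 1) * τ - 2) / (4 * τ * (τ + 1))

open Set Filter Real

namespace RiccatiAux

/-- clamp `x` to the interval `[m, M]`. -/
noncomputable def pr (m M x : ℝ) : ℝ := max m (min x M)

/-- modified (time- and space-clamped) vector field -/
noncomputable def vf (τ₀ m M t x : ℝ) : ℝ :=
  bR (max t τ₀) - aR (max t τ₀) * pr m M x ^ 2

lemma one_lt_sqrt2 : 1 < Real.sqrt 2 := by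
  have h := Real.sq_sqrt (by norm_num : (0:ℝ) ≤ 2)
  nlinarith [Real.sqrt_nonneg 2]

lemma sqrt2_lt_two : Real.sqrt 2 < 2 := by
  have h := Real.sq_sqrt (by norm_num : (0:ℝ) ≤ 2)
  nlinarith [Real.sqrt_nonneg 2]

lemma aR_pos {t : ℝ} (ht : 0 < t) : 0 < aR t := by
  have h1 := one_lt_sqrt2
  exact div_pos (by nlinarith) (by nlinarith)

lemma aR_le_one {t : ℝ} (ht : 4 ≤ t) : aR t ≤ 1 := by
  have h1 := one_lt_sqrt2
  have h2 := sqrt2_lt_two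
  rw [aR, div_le_one (by nlinarith)]
  nlinarith

lemma abs_bR_le_one {t : ℝ} (ht : 4 ≤ t) : |bR t| ≤ 1 := by
  have h1 := one_lt_sqrt2
  have h2 := sqrt2_lt_two
  have hden : (0:ℝ) < 4 * t * (t + 1) := by nlinarith
  rw [bR, abs_div, abs_of_pos hden, div_le_one hden]
  rw [abs_le]
  constructor <;> nlinarith

lemma bR_pos {τ₀ t : ℝ} (hτ₀ : 2 * (Real.sqrt 2 + 1) < τ₀) (ht : τ₀ ≤ t) : 0 < bR t := by
  have h1 := one_lt_sqrt2
  have h2 := Real.sq_sqrt (by norm_num : (0:ℝ) ≤ 2)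
  have htp : 4 < t := by nlinarith
  exact div_pos (by nlinarith) (by nlinarith)

lemma top_neg {τ₀ t : ℝ} (hτ₀ : 2 * (Real.sqrt 2 + 1) < τ₀) (ht : τ₀ ≤ t) :
    bR t - aR t * (Real.sqrt 2 - 1) ^ 2 < 0 := by
  have h1 := one_lt_sqrt2
  have h2 : Real.sqrt 2 * Real.sqrt 2 = 2 := Real.mul_self_sqrt (by norm_num)
  have htp : 4 < t := by nlinarith
  have hden : (0:ℝ) < 4 * t * (t + 1) := by nlinarith
  have hkey : ((Real.sqrt 2 + 1) * t + 2) * (Real.sqrt 2 - 1) ^ 2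
      - ((Real.sqrt 2 - 1) * t - 2) = 8 - 4 * Real.sqrt 2 := by
    linear_combination ((Real.sqrt 2 - 1) * t + 2) * h2
  have h84 : (0:ℝ) < 8 - 4 * Real.sqrt 2 := by nlinarith [sqrt2_lt_two]
  rw [sub_neg, bR, aR, div_mul_eq_mul_div, div_lt_div_iff₀ hden hden]
  apply mul_lt_mul_of_pos_right _ hden
  linarith

lemma pr_lip (m M x y : ℝ) : |pr m M x - pr m M y| ≤ |x - y| := by
  rw [pr, pr, max_comm m (min x M), max_comm m (min y M)]
  refine (abs_max_sub_max_le_abs _ _ _).trans ?_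
  refine (abs_min_sub_min_le_max x M y M).trans ?_
  simp

lemma abs_pr_le {m M : ℝ} (hm : -1 ≤ m) (hM : M ≤ 1) (hmM : m ≤ M) (x : ℝ) :
    |pr m M x| ≤ 1 := by
  rw [abs_le]
  constructor
  · exact le_trans hm (le_max_left _ _)
  · exact le_trans (max_le hmM (min_le_right _ _)) hM


section Field

variable {τ₀ m M : ℝ}

lemma vf_lip (hm : -1 ≤ m) (hM : M ≤ 1) (hmM : m ≤ M) (hτ4 : 4 < τ₀) (t : ℝ) :
    LipschitzWith 2 (fun x => vf τ₀ m M t x) := by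
  apply LipschitzWith.of_dist_le_mul
  intro x y
  have hT : (4:ℝ) ≤ max t τ₀ := le_trans hτ4.le (le_max_right _ _)
  have haT : 0 < aR (max t τ₀) := aR_pos (by linarith)
  rw [Real.dist_eq, Real.dist_eq]
  push_cast
  have hexp : vf τ₀ m M t x - vf τ₀ m M t y
      = aR (max t τ₀) * ((pr m M y + pr m M x) * (pr m M y - pr m M x)) := by
    rw [vf, vf]; ring
  rw [hexp, abs_mul, abs_mul]
  have h1 : |aR (max t τ₀)| ≤ 1 := by
    rw [abs_of_pos haT]; exact aR_le_one hT
  have h2 : |pr m M y + pr m M x| ≤ 2 := by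
    calc |pr m M y + pr m M x| ≤ |pr m M y| + |pr m M x| := abs_add_le _ _
    _ ≤ 1 + 1 := add_le_add (abs_pr_le hm hM hmM y) (abs_pr_le hm hM hmM x)
    _ = 2 := by norm_num
  have h3 : |pr m M y - pr m M x| ≤ |x - y| := by
    rw [abs_sub_comm x y]; exact pr_lip m M y x
  have hnn : (0:ℝ) ≤ |x - y| := abs_nonneg _
  calc |aR (max t τ₀)| * (|pr m M y + pr m M x| * |pr m M y - pr m M x|)
      ≤ 1 * (2 * |x - y|) := by
        apply mul_le_mul h1 _ (by positivity) (by norm_num)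
        exact mul_le_mul h2 h3 (abs_nonneg _) (by norm_num)
    _ = 2 * |x - y| := by ring

lemma vf_bound (hm : -1 ≤ m) (hM : M ≤ 1) (hmM : m ≤ M) (hτ4 : 4 < τ₀) (t x : ℝ) :
    |vf τ₀ m M t x| ≤ 2 := by
  have hT : (4:ℝ) ≤ max t τ₀ := le_trans hτ4.le (le_max_right _ _)
  have haT : 0 < aR (max t τ₀) := aR_pos (by linarith)
  rw [vf]
  refine (abs_sub _ _).trans ?_
  have h1 : |bR (max t τ₀)| ≤ 1 := abs_bR_le_one hT
  have h2 : |aR (max t τ₀) * pr m M x ^ 2| ≤ 1 := by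
    rw [abs_mul]
    have := abs_pr_le hm hM hmM x
    have h3 : |pr m M x ^ 2| ≤ 1 := by
      rw [abs_pow]
      calc |pr m M x| ^ 2 ≤ 1 ^ 2 := by
            apply pow_le_pow_left₀ (abs_nonneg _) this
        _ = 1 := one_pow 2
    calc |aR (max t τ₀)| * |pr m M x ^ 2| ≤ 1 * 1 := by
          apply mul_le_mul _ h3 (abs_nonneg _) (by norm_num)
          rw [abs_of_pos haT]; exact aR_le_one hT
      _ = 1 := by norm_num
  linarith

lemma vf_contT (hτ4 : 4 < τ₀) (x : ℝ) : Continuous (fun t => vf τ₀ m M t x) := by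
  have hT : Continuous fun t : ℝ => max t τ₀ := continuous_id.max continuous_const
  have hTpos : ∀ t : ℝ, (0:ℝ) < max t τ₀ := fun t => lt_of_lt_of_le (by linarith) (le_max_right _ _)
  have hden : ∀ t : ℝ, 4 * max t τ₀ * (max t τ₀ + 1) ≠ 0 := by
    intro t; have := hTpos t; positivity
  have hb : Continuous fun t : ℝ => bR (max t τ₀) := by
    simp only [bR]
    exact (((continuous_const.mul hT).sub continuous_const).div
      ((continuous_const.mul hT).mul (hT.add continuous_const)) hden)
  have ha : Continuous fun t : ℝ => aR (max t τ₀) := by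
    simp only [aR]
    exact (((continuous_const.mul hT).add continuous_const).div
      ((continuous_const.mul hT).mul (hT.add continuous_const)) hden)
  simp only [vf]
  exact hb.sub (ha.mul continuous_const)

lemma exists_global (hm : -1 ≤ m) (hM : M ≤ 1) (hmM : m ≤ M) (hτ4 : 4 < τ₀) (x₀ : ℝ) :
    ∃ ψ : ℝ → ℝ, ψ τ₀ = x₀ ∧
      ∀ t, τ₀ ≤ t → HasDerivWithinAt ψ (vf τ₀ m M t (ψ t)) (Ici τ₀) t := by
  have hlip := vf_lip hm hM hmM hτ4
  have hPL : ∀ N : ℕ, ∃ f : ℝ → ℝ, f τ₀ = x₀ ∧ ∀ t ∈ Icc τ₀ (τ₀ + ((N:ℝ) + 1)),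
      HasDerivWithinAt f (vf τ₀ m M t (f t)) (Icc τ₀ (τ₀ + ((N:ℝ) + 1))) t := by
    intro N
    have hmem : τ₀ ∈ Icc τ₀ (τ₀ + ((N:ℝ) + 1)) :=
      ⟨le_rfl, by linarith [Nat.cast_nonneg (α := ℝ) N]⟩
    have hP : IsPicardLindelof (vf τ₀ m M) (tmin := τ₀) (tmax := τ₀ + ((N:ℝ) + 1))
        ⟨τ₀, hmem⟩ x₀ (2 * ((N:NNReal) + 1)) 0 2 2 := by
      refine ⟨?_, ?_, ?_, ?_⟩
      · exact fun t _ => (hlip t).lipschitzOnWith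
      · exact fun x _ => (vf_contT hτ4 x).continuousOn
      · intro t _ x _
        simpa [Real.norm_eq_abs] using vf_bound hm hM hmM hτ4 t x
      · have h1 : τ₀ + ((N:ℝ) + 1) - τ₀ = (N:ℝ) + 1 := by ring
        show (2:ℝ) * max (τ₀ + ((N:ℝ) + 1) - τ₀) (τ₀ - τ₀) ≤ 2 * ((N:ℝ) + 1) - 0
        rw [h1, sub_self, max_eq_left (by positivity : (0:ℝ) ≤ (N:ℝ) + 1)]
        linarith
    exact hP.exists_eq_forall_mem_Icc_hasDerivWithinAt₀
  choose F hF0 hFd using hPL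
  have hcont : ∀ N : ℕ, ContinuousOn (F N) (Icc τ₀ (τ₀ + ((N:ℝ) + 1))) :=
    fun N t ht => (hFd N t ht).continuousWithinAt
  have hderiv' : ∀ (N : ℕ) (t : ℝ), t ∈ Ico τ₀ (τ₀ + ((N:ℝ) + 1)) →
      HasDerivWithinAt (F N) (vf τ₀ m M t (F N t)) (Ici t) t := by
    intro N t ht
    have h1 := hFd N t ⟨ht.1, ht.2.le⟩
    have h2 : HasDerivWithinAt (F N) (vf τ₀ m M t (F N t))
        (Ici t ∩ Iic (τ₀ + ((N:ℝ) + 1))) t :=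
      h1.mono (fun u hu => ⟨ht.1.trans hu.1, hu.2⟩)
    exact (hasDerivWithinAt_inter (Iic_mem_nhds ht.2)).mp h2
  have agree : ∀ (N K : ℕ) (t : ℝ), t ∈ Icc τ₀ (τ₀ + ((N:ℝ) + 1)) →
      t ∈ Icc τ₀ (τ₀ + ((K:ℝ) + 1)) → F N t = F K t := by
    intro N K t h1 h2
    set c := min (τ₀ + ((N:ℝ) + 1)) (τ₀ + ((K:ℝ) + 1)) with hc
    have hNsub : Icc τ₀ c ⊆ Icc τ₀ (τ₀ + ((N:ℝ) + 1)) :=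
      Icc_subset_Icc le_rfl (min_le_left _ _)
    have hKsub : Icc τ₀ c ⊆ Icc τ₀ (τ₀ + ((K:ℝ) + 1)) :=
      Icc_subset_Icc le_rfl (min_le_right _ _)
    have huniq := ODE_solution_unique_of_mem_Icc_right
      (v := vf τ₀ m M) (s := fun _ => univ) (K := 2) (a := τ₀) (b := c)
      (fun t _ => (hlip t).lipschitzOnWith)
      ((hcont N).mono hNsub)
      (fun u hu => hderiv' N u ⟨hu.1, lt_of_lt_of_le hu.2 (min_le_left _ _)⟩)
      (fun _ _ => mem_univ _)
      ((hcont K).mono hKsub)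
      (fun u hu => hderiv' K u ⟨hu.1, lt_of_lt_of_le hu.2 (min_le_right _ _)⟩)
      (fun _ _ => mem_univ _)
      (by rw [hF0, hF0])
    exact huniq ⟨h1.1, le_min h1.2 h2.2⟩
  refine ⟨fun t => F ⌊t - τ₀⌋₊ t, ?_, ?_⟩
  · simpa using hF0 0
  · intro t ht
    set N := ⌊t - τ₀⌋₊ with hN
    have htN : t < τ₀ + ((N:ℝ) + 1) := by
      have := Nat.lt_floor_add_one (t - τ₀)
      rw [hN]; push_cast; linarith
    have hEq : EqOn (fun u => F ⌊u - τ₀⌋₊ u) (F N) (Icc τ₀ (τ₀ + ((N:ℝ) + 1))) := by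
      intro u hu
      have hu2 : u ∈ Icc τ₀ (τ₀ + ((⌊u - τ₀⌋₊:ℝ) + 1)) := by
        refine ⟨hu.1, ?_⟩
        have := Nat.lt_floor_add_one (u - τ₀)
        push_cast
        linarith
      exact agree ⌊u - τ₀⌋₊ N u hu2 hu
    have h1 := hFd N t ⟨ht, htN.le⟩
    rw [← Ici_inter_Iic] at h1
    have h3 := (hasDerivWithinAt_inter (Iic_mem_nhds htN)).mp h1
    have hev : (fun u => F ⌊u - τ₀⌋₊ u) =ᶠ[nhdsWithin t (Ici τ₀)] F N := by
      filter_upwards [mem_nhdsWithin_of_mem_nhds (Iic_mem_nhds htN),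
        self_mem_nhdsWithin] with u hu1 hu2
      exact hEq ⟨hu2, hu1⟩
    have hft : F ⌊t - τ₀⌋₊ t = F N t := by rw [← hN]
    rw [show vf τ₀ m M t (F ⌊t - τ₀⌋₊ t) = vf τ₀ m M t (F N t) by rw [hft]]
    exact h3.congr_of_eventuallyEq hev hft

end Field


section Stay

variable {τ₀ : ℝ} {ψ d : ℝ → ℝ}

lemma sol_cont (hd : ∀ τ, τ₀ ≤ τ → HasDerivWithinAt ψ (d τ) (Ici τ₀) τ) :
    ContinuousOn ψ (Ici τ₀) := fun t ht => (hd t ht).continuousWithinAt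

lemma stay_above (hd : ∀ τ, τ₀ ≤ τ → HasDerivWithinAt ψ (d τ) (Ici τ₀) τ)
    {ℓ t₁ t₂ : ℝ} (ht₁ : τ₀ ≤ t₁) (h12 : t₁ ≤ t₂)
    (hsign : ∀ τ, t₁ ≤ τ → τ ≤ t₂ → ψ τ < ℓ → 0 ≤ d τ)
    (h1 : ℓ ≤ ψ t₁) : ℓ ≤ ψ t₂ := by
  by_contra hcon
  push_neg at hcon
  have hcont := sol_cont hd
  have hIsub : Icc t₁ t₂ ⊆ Ici τ₀ := fun u hu => le_trans ht₁ hu.1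
  set S := Icc t₁ t₂ ∩ ψ ⁻¹' (Ici ℓ) with hS
  have hS_closed : IsClosed S :=
    ContinuousOn.preimage_isClosed_of_isClosed (hcont.mono hIsub) isClosed_Icc isClosed_Ici
  have hne : S.Nonempty := ⟨t₁, ⟨le_rfl, h12⟩, h1⟩
  have hbdd : BddAbove S := BddAbove.mono inter_subset_left bddAbove_Icc
  set σ := sSup S with hσdef
  have hσS : σ ∈ S := hS_closed.csSup_mem hne hbdd
  obtain ⟨⟨hσ1, hσ2⟩, hσℓ⟩ := hσS
  rw [mem_preimage, mem_Ici] at hσℓ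
  have hσt2 : σ < t₂ := by
    rcases lt_or_eq_of_le hσ2 with h | h
    · exact h
    · exact absurd (h ▸ hσℓ : ℓ ≤ ψ t₂) (not_le.mpr hcon)
  have hlt : ∀ u, σ < u → u ≤ t₂ → ψ u < ℓ := by
    intro u hu1 hu2
    by_contra hge
    push_neg at hge
    exact absurd (le_csSup hbdd ⟨⟨hσ1.trans hu1.le, hu2⟩, hge⟩) (not_le.mpr hu1)
  have hmono : MonotoneOn ψ (Icc σ t₂) := by
    have hsub2 : Icc σ t₂ ⊆ Ici τ₀ := fun u hu => le_trans (ht₁.trans hσ1) hu.1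
    apply monotoneOn_of_deriv_nonneg (convex_Icc _ _) (hcont.mono hsub2)
    · intro u hu
      rw [interior_Icc] at hu
      have hu0 : τ₀ < u := lt_of_le_of_lt (ht₁.trans hσ1) hu.1
      exact ((hd u hu0.le).hasDerivAt (Ici_mem_nhds hu0)).differentiableAt.differentiableWithinAt
    · intro u hu
      rw [interior_Icc] at hu
      have hu0 : τ₀ < u := lt_of_le_of_lt (ht₁.trans hσ1) hu.1
      have hda := (hd u hu0.le).hasDerivAt (Ici_mem_nhds hu0)
      rw [hda.deriv]
      exact hsign u (hσ1.trans hu.1.le) hu.2.le (hlt u hu.1 hu.2.le)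
  have := hmono ⟨le_rfl, hσt2.le⟩ ⟨hσt2.le, le_rfl⟩ hσt2.le
  linarith

lemma stay_above' (hd : ∀ τ, τ₀ ≤ τ → HasDerivWithinAt ψ (d τ) (Ici τ₀) τ)
    {ℓ t₁ t₂ : ℝ} (ht₁ : τ₀ ≤ t₁) (h12 : t₁ ≤ t₂)
    (hsign : ∀ τ, t₁ ≤ τ → τ ≤ t₂ → ℓ < ψ τ → 0 ≤ d τ)
    (h1 : ℓ < ψ t₁) : ℓ < ψ t₂ := by
  by_contra hcon
  push_neg at hcon
  have hcont := sol_cont hd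
  have hIsub : Icc t₁ t₂ ⊆ Ici τ₀ := fun u hu => le_trans ht₁ hu.1
  set S := Icc t₁ t₂ ∩ ψ ⁻¹' (Iic ℓ) with hS
  have hS_closed : IsClosed S :=
    ContinuousOn.preimage_isClosed_of_isClosed (hcont.mono hIsub) isClosed_Icc isClosed_Iic
  have hne : S.Nonempty := ⟨t₂, ⟨h12, le_rfl⟩, hcon⟩
  have hbdd : BddBelow S := BddBelow.mono inter_subset_left bddBelow_Icc
  set σ := sInf S with hσdef
  have hσS : σ ∈ S := hS_closed.csInf_mem hne hbdd
  obtain ⟨⟨hσ1, hσ2⟩, hσℓ⟩ := hσS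
  rw [mem_preimage, mem_Iic] at hσℓ
  have hσt1 : t₁ < σ := by
    rcases lt_or_eq_of_le hσ1 with h | h
    · exact h
    · exact absurd (h ▸ h1 : ℓ < ψ σ) (not_lt.mpr hσℓ)
  have hgt : ∀ u, t₁ ≤ u → u < σ → ℓ < ψ u := by
    intro u hu1 hu2
    by_contra hge
    push_neg at hge
    exact absurd (csInf_le hbdd ⟨⟨hu1, hu2.le.trans hσ2⟩, hge⟩) (not_le.mpr hu2)
  have hmono : MonotoneOn ψ (Icc t₁ σ) := by
    have hsub2 : Icc t₁ σ ⊆ Ici τ₀ := fun u hu => le_trans ht₁ hu.1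
    apply monotoneOn_of_deriv_nonneg (convex_Icc _ _) (hcont.mono hsub2)
    · intro u hu
      rw [interior_Icc] at hu
      have hu0 : τ₀ < u := lt_of_le_of_lt ht₁ hu.1
      exact ((hd u hu0.le).hasDerivAt (Ici_mem_nhds hu0)).differentiableAt.differentiableWithinAt
    · intro u hu
      rw [interior_Icc] at hu
      have hu0 : τ₀ < u := lt_of_le_of_lt ht₁ hu.1
      have hda := (hd u hu0.le).hasDerivAt (Ici_mem_nhds hu0)
      rw [hda.deriv]
      exact hsign u hu.1.le (hu.2.le.trans hσ2) (hgt u hu.1.le hu.2)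
  have := hmono ⟨le_rfl, hσt1.le⟩ ⟨hσt1.le, le_rfl⟩ hσt1.le
  linarith

lemma stay_below (hd : ∀ τ, τ₀ ≤ τ → HasDerivWithinAt ψ (d τ) (Ici τ₀) τ)
    {ℓ t₁ t₂ : ℝ} (ht₁ : τ₀ ≤ t₁) (h12 : t₁ ≤ t₂)
    (hsign : ∀ τ, t₁ ≤ τ → τ ≤ t₂ → ℓ < ψ τ → d τ ≤ 0)
    (h1 : ψ t₁ ≤ ℓ) : ψ t₂ ≤ ℓ := by
  have := stay_above (ψ := fun τ => -ψ τ) (d := fun τ => -d τ) (ℓ := -ℓ)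
    (fun τ hτ => (hd τ hτ).neg) ht₁ h12
    (fun τ hτ1 hτ2 hlt => neg_nonneg.mpr (hsign τ hτ1 hτ2 (by simpa using hlt)))
    (by simpa using h1)
  simpa using this

lemma stay_below' (hd : ∀ τ, τ₀ ≤ τ → HasDerivWithinAt ψ (d τ) (Ici τ₀) τ)
    {ℓ t₁ t₂ : ℝ} (ht₁ : τ₀ ≤ t₁) (h12 : t₁ ≤ t₂)
    (hsign : ∀ τ, t₁ ≤ τ → τ ≤ t₂ → ψ τ < ℓ → d τ ≤ 0)
    (h1 : ψ t₁ < ℓ) : ψ t₂ < ℓ := by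
  have := stay_above' (ψ := fun τ => -ψ τ) (d := fun τ => -d τ) (ℓ := -ℓ)
    (fun τ hτ => (hd τ hτ).neg) ht₁ h12
    (fun τ hτ1 hτ2 hlt => neg_nonneg.mpr (hsign τ hτ1 hτ2 (by simpa using hlt)))
    (by simpa using h1)
  simpa using this

lemma exits_above {c : ℝ} (h : HasDerivWithinAt ψ c (Ici τ₀) τ₀) (hc : 0 < c) :
    ∃ τ, τ₀ < τ ∧ ψ τ₀ < ψ τ := by
  rw [hasDerivWithinAt_iff_tendsto_slope] at h
  have hset : Ici τ₀ \ {τ₀} = Ioi τ₀ := by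
    ext u
    simp only [mem_diff, mem_Ici, mem_singleton_iff, mem_Ioi]
    constructor
    · rintro ⟨h1, h2⟩; exact lt_of_le_of_ne h1 (Ne.symm h2)
    · intro h1; exact ⟨h1.le, ne_of_gt h1⟩
  rw [hset] at h
  have hev : ∀ᶠ u in nhdsWithin τ₀ (Ioi τ₀), 0 < slope ψ τ₀ u := h.eventually (lt_mem_nhds hc)
  obtain ⟨u, hu1, hu2⟩ := (hev.and eventually_mem_nhdsWithin).exists
  refine ⟨u, hu2, ?_⟩
  rw [slope_def_field] at hu1
  have h3 : (0:ℝ) < u - τ₀ := sub_pos.mpr hu2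
  have := mul_pos hu1 h3
  rw [div_mul_cancel₀ _ (ne_of_gt h3)] at this
  linarith

lemma exits_below {c : ℝ} (h : HasDerivWithinAt ψ c (Ici τ₀) τ₀) (hc : c < 0) :
    ∃ τ, τ₀ < τ ∧ ψ τ < ψ τ₀ := by
  obtain ⟨τ, h1, h2⟩ := exits_above (ψ := fun τ => -ψ τ) (c := -c) h.neg (by linarith)
  exact ⟨τ, h1, by simpa using h2⟩

end Stay

end RiccatiAux

theorem riccati_solutions_in_strips (τ₀ : ℝ) (hτ₀ : 2 * (Real.sqrt 2 + 1) < τ₀) :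
    (∃ ψ₁ : ℝ → ℝ,
      (∀ τ : ℝ, τ₀ ≤ τ →
        HasDerivWithinAt ψ₁ (bR τ - aR τ * ψ₁ τ ^ 2) (Set.Ici τ₀) τ) ∧
      (∀ τ : ℝ, τ₀ ≤ τ → 0 ≤ ψ₁ τ ∧ ψ₁ τ ≤ Real.sqrt 2 - 1)) ∧
    (∃ ψ₂ : ℝ → ℝ,
      (∀ τ : ℝ, τ₀ ≤ τ →
        HasDerivWithinAt ψ₂ (bR τ - aR τ * ψ₂ τ ^ 2) (Set.Ici τ₀) τ) ∧
      (∀ τ : ℝ, τ₀ ≤ τ → 1 - Real.sqrt 2 ≤ ψ₂ τ ∧ ψ₂ τ ≤ 0)) := by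
  have h1s := RiccatiAux.one_lt_sqrt2
  have h2s := RiccatiAux.sqrt2_lt_two
  have hτ4 : 4 < τ₀ := by nlinarith
  open RiccatiAux in
  constructor
  · -- First strip D₁ = [0, √2 - 1]
    obtain ⟨ψ, hψ0, hψd⟩ := RiccatiAux.exists_global (m := 0) (M := Real.sqrt 2 - 1)
      (by norm_num) (by linarith) (by linarith) hτ4 0
    have hbounds : ∀ τ, τ₀ ≤ τ → 0 ≤ ψ τ ∧ ψ τ ≤ Real.sqrt 2 - 1 := by
      intro τ hτ
      constructor
      · apply RiccatiAux.stay_above hψd le_rfl hτ ?_ (le_of_eq hψ0.symm)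
        intro u _ _ hlt
        have hpr : RiccatiAux.pr 0 (Real.sqrt 2 - 1) (ψ u) = 0 := by
          rw [RiccatiAux.pr, min_eq_left (by linarith : ψ u ≤ Real.sqrt 2 - 1),
            max_eq_left hlt.le]
        have hb := RiccatiAux.bR_pos hτ₀ (le_max_right u τ₀)
        rw [RiccatiAux.vf, hpr]
        nlinarith
      · apply RiccatiAux.stay_below hψd le_rfl hτ ?_ (by rw [hψ0]; linarith)
        intro u _ _ hgt
        have hpr : RiccatiAux.pr 0 (Real.sqrt 2 - 1) (ψ u) = Real.sqrt 2 - 1 := by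
          rw [RiccatiAux.pr, min_eq_right hgt.le, max_eq_right (by linarith)]
        rw [RiccatiAux.vf, hpr]
        exact (RiccatiAux.top_neg hτ₀ (le_max_right u τ₀)).le
    refine ⟨ψ, ?_, hbounds⟩
    intro τ hτ
    have h := hψd τ hτ
    have hval : RiccatiAux.vf τ₀ 0 (Real.sqrt 2 - 1) τ (ψ τ) = bR τ - aR τ * ψ τ ^ 2 := by
      obtain ⟨hb1, hb2⟩ := hbounds τ hτ
      rw [RiccatiAux.vf, max_eq_left hτ, RiccatiAux.pr, min_eq_left hb2, max_eq_right hb1]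
    rwa [hval] at h
  · -- Second strip D₂ = [1 - √2, 0] : Ważewski argument
    have hm : (-1:ℝ) ≤ 1 - Real.sqrt 2 := by linarith
    have hM : (0:ℝ) ≤ 1 := by norm_num
    have hmM : (1:ℝ) - Real.sqrt 2 ≤ 0 := by linarith
    have hex := fun x : ℝ => RiccatiAux.exists_global (τ₀ := τ₀)
      (m := 1 - Real.sqrt 2) (M := 0) hm hM hmM hτ4 x
    choose Ψ hΨ0 hΨd using hex
    have hprpos : ∀ x : ℝ, 0 ≤ x → RiccatiAux.pr (1 - Real.sqrt 2) 0 x = 0 := by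
      intro x hx
      rw [RiccatiAux.pr, min_eq_right hx, max_eq_right (by linarith)]
    have hprneg : ∀ x : ℝ, x ≤ 1 - Real.sqrt 2 → RiccatiAux.pr (1 - Real.sqrt 2) 0 x
        = 1 - Real.sqrt 2 := by
      intro x hx
      rw [RiccatiAux.pr, min_eq_left (by linarith), max_eq_left hx]
    have hfieldpos : ∀ u x : ℝ, 0 ≤ x → 0 ≤ RiccatiAux.vf τ₀ (1 - Real.sqrt 2) 0 u x := by
      intro u x hx
      have hb := RiccatiAux.bR_pos hτ₀ (le_max_right u τ₀)
      rw [RiccatiAux.vf, hprpos x hx]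
      nlinarith
    have hfieldneg : ∀ u x : ℝ, x ≤ 1 - Real.sqrt 2 →
        RiccatiAux.vf τ₀ (1 - Real.sqrt 2) 0 u x ≤ 0 := by
      intro u x hx
      have hb := RiccatiAux.top_neg hτ₀ (le_max_right u τ₀)
      rw [RiccatiAux.vf, hprneg x hx]
      have hsq : (1 - Real.sqrt 2) ^ 2 = (Real.sqrt 2 - 1) ^ 2 := by ring
      rw [hsq]
      linarith
    have perm_up : ∀ x τ₁ τ₂, τ₀ ≤ τ₁ → τ₁ ≤ τ₂ → 0 < Ψ x τ₁ → 0 < Ψ x τ₂ := by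
      intro x τ₁ τ₂ h1 h2 h3
      exact RiccatiAux.stay_above' (hΨd x) h1 h2
        (fun u _ _ hgt => hfieldpos u (Ψ x u) hgt.le) h3
    have perm_down : ∀ x τ₁ τ₂, τ₀ ≤ τ₁ → τ₁ ≤ τ₂ →
        Ψ x τ₁ < 1 - Real.sqrt 2 → Ψ x τ₂ < 1 - Real.sqrt 2 := by
      intro x τ₁ τ₂ h1 h2 h3
      exact RiccatiAux.stay_below' (hΨd x) h1 h2
        (fun u _ _ hlt => hfieldneg u (Ψ x u) hlt.le) h3
    set A := {x : ℝ | ∃ τ, τ₀ ≤ τ ∧ 0 < Ψ x τ} with hA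
    set B := {x : ℝ | ∃ τ, τ₀ ≤ τ ∧ Ψ x τ < 1 - Real.sqrt 2} with hB
    have hgron : ∀ x y τ, τ₀ ≤ τ →
        dist (Ψ x τ) (Ψ y τ) ≤ dist x y * Real.exp (2 * (τ - τ₀)) := by
      intro x y τ hτ
      have h := dist_le_of_trajectories_ODE (v := RiccatiAux.vf τ₀ (1 - Real.sqrt 2) 0)
        (K := 2) (a := τ₀) (b := τ) (δ := dist x y)
        (fun u => RiccatiAux.vf_lip hm hM hmM hτ4 u)
        ((RiccatiAux.sol_cont (hΨd x)).mono Icc_subset_Ici_self)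
        (fun u hu => (hΨd x u hu.1).mono (Ici_subset_Ici.mpr hu.1))
        ((RiccatiAux.sol_cont (hΨd y)).mono Icc_subset_Ici_self)
        (fun u hu => (hΨd y u hu.1).mono (Ici_subset_Ici.mpr hu.1))
        (le_of_eq (by rw [hΨ0 x, hΨ0 y]))
        τ ⟨hτ, le_rfl⟩
      have hcast : ((2:NNReal):ℝ) = 2 := rfl
      rwa [hcast] at h
    have hAopen : IsOpen A := by
      rw [Metric.isOpen_iff]
      rintro x ⟨τ, hτ, hpos⟩
      refine ⟨Ψ x τ * Real.exp (-(2 * (τ - τ₀))), by positivity, ?_⟩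
      intro y hy
      rw [Metric.mem_ball] at hy
      refine ⟨τ, hτ, ?_⟩
      have h1 := hgron y x τ hτ
      have h2 : dist y x * Real.exp (2 * (τ - τ₀)) < Ψ x τ := by
        have := mul_lt_mul_of_pos_right hy (Real.exp_pos (2 * (τ - τ₀)))
        rwa [mul_assoc, ← Real.exp_add, neg_add_cancel, Real.exp_zero, mul_one] at this
      have h3 : dist (Ψ y τ) (Ψ x τ) < Ψ x τ := lt_of_le_of_lt h1 h2
      rw [Real.dist_eq] at h3
      have h4 := abs_lt.mp h3
      linarith [h4.1]
    have hBopen : IsOpen B := by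
      rw [Metric.isOpen_iff]
      rintro x ⟨τ, hτ, hneg⟩
      refine ⟨((1 - Real.sqrt 2) - Ψ x τ) * Real.exp (-(2 * (τ - τ₀))),
        mul_pos (by linarith) (Real.exp_pos _), ?_⟩
      intro y hy
      rw [Metric.mem_ball] at hy
      refine ⟨τ, hτ, ?_⟩
      have h1 := hgron y x τ hτ
      have h2 : dist y x * Real.exp (2 * (τ - τ₀)) < (1 - Real.sqrt 2) - Ψ x τ := by
        have := mul_lt_mul_of_pos_right hy (Real.exp_pos (2 * (τ - τ₀)))
        rwa [mul_assoc, ← Real.exp_add, neg_add_cancel, Real.exp_zero, mul_one] at this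
      have h3 : dist (Ψ y τ) (Ψ x τ) < (1 - Real.sqrt 2) - Ψ x τ := lt_of_le_of_lt h1 h2
      rw [Real.dist_eq] at h3
      have h4 := abs_lt.mp h3
      linarith [h4.2]
    have h0A : (0:ℝ) ∈ A := by
      have hval : RiccatiAux.vf τ₀ (1 - Real.sqrt 2) 0 τ₀ (Ψ 0 τ₀) = bR τ₀ := by
        rw [hΨ0, RiccatiAux.vf, hprpos 0 le_rfl, max_self]
        ring
      have h := hΨd 0 τ₀ le_rfl
      rw [hval] at h
      obtain ⟨τ, hτ, hgt⟩ := RiccatiAux.exits_above h (RiccatiAux.bR_pos hτ₀ le_rfl)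
      rw [hΨ0] at hgt
      exact ⟨τ, hτ.le, hgt⟩
    have hmB : (1 - Real.sqrt 2 : ℝ) ∈ B := by
      have hval : RiccatiAux.vf τ₀ (1 - Real.sqrt 2) 0 τ₀ (Ψ (1 - Real.sqrt 2) τ₀)
          = bR τ₀ - aR τ₀ * (Real.sqrt 2 - 1) ^ 2 := by
        rw [hΨ0, RiccatiAux.vf, hprneg _ le_rfl, max_self]
        ring
      have h := hΨd (1 - Real.sqrt 2) τ₀ le_rfl
      rw [hval] at h
      obtain ⟨τ, hτ, hlt⟩ := RiccatiAux.exits_below h (RiccatiAux.top_neg hτ₀ le_rfl)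
      rw [hΨ0] at hlt
      exact ⟨τ, hτ.le, hlt⟩
    have hAB : ∀ x : ℝ, ¬(x ∈ A ∧ x ∈ B) := by
      rintro x ⟨⟨τ₁, hτ₁, h₁⟩, ⟨τ₂, hτ₂, h₂⟩⟩
      rcases le_total τ₁ τ₂ with h | h
      · have := perm_up x τ₁ τ₂ hτ₁ h h₁
        linarith
      · have := perm_down x τ₂ τ₁ hτ₂ h h₂
        linarith
    have hgood : ∃ x, x ∈ Set.Icc (1 - Real.sqrt 2) (0:ℝ) ∧ x ∉ A ∧ x ∉ B := by
      by_contra hcon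
      push_neg at hcon
      have hcover : Set.Icc (1 - Real.sqrt 2) (0:ℝ) ⊆ A ∪ B := by
        intro x hx
        by_cases hxA : x ∈ A
        · exact Or.inl hxA
        · exact Or.inr (hcon x hx hxA)
      have hconn := isPreconnected_Icc (a := 1 - Real.sqrt 2) (b := (0:ℝ)) A B
        hAopen hBopen hcover
        ⟨0, ⟨by linarith, le_rfl⟩, h0A⟩ ⟨1 - Real.sqrt 2, ⟨le_rfl, by linarith⟩, hmB⟩
      obtain ⟨x, -, hxA, hxB⟩ := hconn
      exact hAB x ⟨hxA, hxB⟩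
    obtain ⟨x, hxI, hxA, hxB⟩ := hgood
    have hbound : ∀ τ, τ₀ ≤ τ → 1 - Real.sqrt 2 ≤ Ψ x τ ∧ Ψ x τ ≤ 0 := by
      intro τ hτ
      constructor
      · by_contra h
        push_neg at h
        exact hxB ⟨τ, hτ, h⟩
      · by_contra h
        push_neg at h
        exact hxA ⟨τ, hτ, h⟩
    refine ⟨Ψ x, ?_, hbound⟩
    intro τ hτ
    have h := hΨd x τ hτ
    have hval : RiccatiAux.vf τ₀ (1 - Real.sqrt 2) 0 τ (Ψ x τ) = bR τ - aR τ * Ψ x τ ^ 2 := by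
      obtain ⟨hb1, hb2⟩ := hbound τ hτ
      rw [RiccatiAux.vf, max_eq_left hτ, RiccatiAux.pr, min_eq_left hb2, max_eq_right hb1]
    rwa [hval] at h
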